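/- Let B be a set of points in PG(n,q) such that every point of PG(n,q)\B lying on a secant line to B lies on no tangent line to B. If the span of B has dimension at least n−k+2, then |B| ≥ θ_{n−k+1} = (q^{n−k+2}−1)/(q−1). -/

import Mathlib

open scoped Classical

noncomputable section

open Module Submodule Finset

section Aux

variable {K V : Type*} [Field K] [AddCommGroup V] [Module K V]

lemma aux_span_eq_of_mem {x v : V} (hv : v ∈ (K ∙ x)) (hv0 : v ≠ 0) :
    (K ∙ v) = K ∙ x := by
  obtain ⟨c, rfl⟩ := Submodule.mem_span_singleton.mp hv
  have hc : c ≠ 0 := by rintro rfl; simp at hv0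
  exact Submodule.span_singleton_smul_eq (isUnit_iff_ne_zero.mpr hc) x

lemma aux_rank2 [FiniteDimensional K V] {x y : V} (hx : x ≠ 0) (hy : y ∉ (K ∙ x)) :
    Module.finrank K ↥((K ∙ x) ⊔ (K ∙ y)) = 2 := by
  have hy0 : y ≠ 0 := by rintro rfl; exact hy (Submodule.zero_mem _)
  have hinf : (K ∙ x) ⊓ (K ∙ y) = ⊥ := by
    rw [Submodule.eq_bot_iff]
    intro v ⟨hv1, hv2⟩
    by_contra hv0
    exact hy ((aux_span_eq_of_mem hv1 hv0) ▸ (aux_span_eq_of_mem hv2 hv0) ▸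
      Submodule.mem_span_singleton_self y)
  have := Submodule.finrank_sup_add_finrank_inf_eq (K ∙ x) (K ∙ y)
  rw [hinf, finrank_bot, finrank_span_singleton hx, finrank_span_singleton hy0] at this
  omega

variable [FiniteDimensional K V] (B : Finset (Projectivization K V))

lemma aux_secant_line
    (hsec : ∀ Q : Projectivization K V, Q ∉ B →
      (∃ L : Submodule K V, Module.finrank K L = 2 ∧ Q.submodule ≤ L ∧
        2 ≤ (B.filter fun P => P.submodule ≤ L).card) →
      ∀ L : Submodule K V, Module.finrank K L = 2 → Q.submodule ≤ L →
        (B.filter fun P => P.submodule ≤ L).card ≠ 1)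
    {a : Projectivization K V} (ha : a ∈ B) {w : V} (hw0 : w ≠ 0) (hw : w ∉ a.submodule)
    (hSEC : (∃ b ∈ B, (K ∙ w) = b.submodule) ∨
      ∃ L : Submodule K V, Module.finrank K L = 2 ∧ (K ∙ w) ≤ L ∧
        2 ≤ (B.filter fun P => P.submodule ≤ L).card) :
    2 ≤ (B.filter fun P => P.submodule ≤ a.submodule ⊔ (K ∙ w)).card := by
  have hwa : w ∉ (K ∙ a.rep) := by rw [← Projectivization.submodule_eq]; exact hw
  have hL2 : Module.finrank K ↥(a.submodule ⊔ (K ∙ w)) = 2 := by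
    rw [Projectivization.submodule_eq]; exact aux_rank2 (Projectivization.rep_nonzero a) hwa
  have haf : a ∈ B.filter fun P => P.submodule ≤ a.submodule ⊔ (K ∙ w) :=
    Finset.mem_filter.mpr ⟨ha, le_sup_left⟩
  by_cases hb : ∃ b ∈ B, (K ∙ w) = b.submodule
  · obtain ⟨b, hbB, hbw⟩ := hb
    have hbf : b ∈ B.filter fun P => P.submodule ≤ a.submodule ⊔ (K ∙ w) :=
      Finset.mem_filter.mpr ⟨hbB, hbw ▸ le_sup_right⟩
    have hab : a ≠ b := by
      rintro rfl
      exact hw (hbw ▸ Submodule.mem_span_singleton_self w)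
    exact Finset.one_lt_card.mpr ⟨a, haf, b, hbf, hab⟩
  · have hQB : Projectivization.mk K w hw0 ∉ B := fun hQ =>
      hb ⟨_, hQ, (Projectivization.submodule_mk w hw0).symm⟩
    rcases hSEC with h | ⟨L', hL'2, hL'le, hL'card⟩
    · exact absurd h hb
    · have hne := hsec (Projectivization.mk K w hw0) hQB
        ⟨L', hL'2, by rw [Projectivization.submodule_mk]; exact hL'le, hL'card⟩
        (a.submodule ⊔ (K ∙ w)) hL2
        (by rw [Projectivization.submodule_mk]; exact le_sup_right)
      have h1 : 0 < (B.filter fun P => P.submodule ≤ a.submodule ⊔ (K ∙ w)).card :=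
        Finset.card_pos.mpr ⟨a, haf⟩
      omega

lemma aux_closure
    (hsec : ∀ Q : Projectivization K V, Q ∉ B →
      (∃ L : Submodule K V, Module.finrank K L = 2 ∧ Q.submodule ≤ L ∧
        2 ≤ (B.filter fun P => P.submodule ≤ L).card) →
      ∀ L : Submodule K V, Module.finrank K L = 2 → Q.submodule ≤ L →
        (B.filter fun P => P.submodule ≤ L).card ≠ 1) :
    ∀ v ∈ (⨆ P ∈ B, Projectivization.submodule P), v ≠ 0 →
      (∃ b ∈ B, (K ∙ v) = b.submodule) ∨
      ∃ L : Submodule K V, Module.finrank K L = 2 ∧ (K ∙ v) ≤ L ∧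
        2 ≤ (B.filter fun P => P.submodule ≤ L).card := by
  suffices H : ∀ T : Finset (Projectivization K V), T ⊆ B →
      ∀ v ∈ (⨆ P ∈ T, Projectivization.submodule P), v ≠ 0 →
      (∃ b ∈ B, (K ∙ v) = b.submodule) ∨
      ∃ L : Submodule K V, Module.finrank K L = 2 ∧ (K ∙ v) ≤ L ∧
        2 ≤ (B.filter fun P => P.submodule ≤ L).card from H B le_rfl
  intro T
  induction T using Finset.induction_on with
  | empty =>
    intro _ v hv hv0
    rw [show (⨆ P ∈ (∅ : Finset (Projectivization K V)), P.submodule) = ⊥ by simp] at hv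
    exact absurd hv hv0
  | insert a T hnot ih =>
    intro hsub v hv hv0
    have haB : a ∈ B := hsub (Finset.mem_insert_self a T)
    have hTB : T ⊆ B := fun x hx => hsub (Finset.mem_insert_of_mem hx)
    rw [← Finset.sup_eq_iSup, Finset.sup_insert] at hv
    obtain ⟨x, hx, w, hwmem, rfl⟩ := Submodule.mem_sup.mp hv
    have hwT : w ∈ ⨆ P ∈ T, Projectivization.submodule P := by
      rw [← Finset.sup_eq_iSup]; exact hwmem
    by_cases hxa : (x + w) ∈ a.submodule
    · left
      refine ⟨a, haB, ?_⟩
      rw [Projectivization.submodule_eq]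
      exact aux_span_eq_of_mem (by rw [← Projectivization.submodule_eq]; exact hxa) hv0
    · have hw0 : w ≠ 0 := by rintro rfl; exact hxa (by simpa using hx)
      have hwa : w ∉ a.submodule := fun hmem => hxa (Submodule.add_mem _ hx hmem)
      have hSECw := ih hTB w hwT hw0
      have h2 := aux_secant_line B hsec haB hw0 hwa hSECw
      right
      refine ⟨a.submodule ⊔ (K ∙ w), ?_, ?_, h2⟩
      · rw [Projectivization.submodule_eq]
        exact aux_rank2 (Projectivization.rep_nonzero a)
          (by rw [← Projectivization.submodule_eq]; exact hwa)
      · rw [Submodule.span_singleton_le_iff_mem]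
        exact Submodule.add_mem _ (le_sup_left (a := a.submodule) hx)
          (le_sup_right (b := (K ∙ w)) (Submodule.mem_span_singleton_self w))

lemma aux_main
    (hsec : ∀ Q : Projectivization K V, Q ∉ B →
      (∃ L : Submodule K V, Module.finrank K L = 2 ∧ Q.submodule ≤ L ∧
        2 ≤ (B.filter fun P => P.submodule ≤ L).card) →
      ∀ L : Submodule K V, Module.finrank K L = 2 → Q.submodule ≤ L →
        (B.filter fun P => P.submodule ≤ L).card ≠ 1)
    {P : Projectivization K V} (hP : P ∈ B) {v : V}
    (hvS : v ∈ ⨆ Q ∈ B, Projectivization.submodule Q) (hvP : v ∉ P.submodule) :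
    ∃ b, b ∈ B ∧ b ≠ P ∧ b.submodule ≤ P.submodule ⊔ (K ∙ v) := by
  have hv0 : v ≠ 0 := fun h => hvP (h ▸ Submodule.zero_mem _)
  have h2 := aux_secant_line B hsec hP hv0 hvP (aux_closure B hsec v hvS hv0)
  obtain ⟨b, hbf, hbP⟩ := Finset.exists_mem_ne h2 P
  obtain ⟨hbB, hble⟩ := Finset.mem_filter.mp hbf
  exact ⟨b, hbB, hbP, hble⟩

lemma aux_geom (q' m : ℕ) :
    (∑ i ∈ Finset.range m, (q' + 1) ^ i) * q' + 1 = (q' + 1) ^ m := by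
  induction m with
  | zero => simp
  | succ m ih =>
    rw [Finset.sum_range_succ, add_mul, add_right_comm, ih, pow_succ]
    ring

lemma aux_card_filter [Fintype K] [Fintype V] (W : Submodule K V) :
    (Finset.univ.filter (fun v => v ∈ W)).card = Fintype.card K ^ Module.finrank K W := by
  rw [← Fintype.card_subtype]
  exact card_eq_pow_finrank

lemma aux_card_sdiff [Fintype K] [Fintype V] {W1 W2 : Submodule K V} (h : W1 ≤ W2) :
    (Finset.univ.filter (fun v => v ∈ W2 ∧ v ∉ W1)).card
      + Fintype.card K ^ Module.finrank K W1 = Fintype.card K ^ Module.finrank K W2 := by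
  have key := Finset.card_filter_add_card_filter_not
    (s := Finset.univ.filter (fun v : V => v ∈ W2)) (p := fun v => v ∈ W1)
  rw [Finset.filter_filter, Finset.filter_filter] at key
  have h1 : Finset.univ.filter (fun v : V => v ∈ W2 ∧ v ∈ W1)
      = Finset.univ.filter (fun v => v ∈ W1) :=
    Finset.filter_congr (fun x _ => ⟨fun hx => hx.2, fun hx => ⟨h hx, hx⟩⟩)
  rw [h1, aux_card_filter, aux_card_filter] at key
  omega

end Aux

/-- The point set of `PG(n,q)`, `q = p^h`: the projectivization of `F_q^{n+1}`. -/
abbrev PGPoint (p h n : ℕ) [Fact p.Prime] :=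
  Projectivization (GaloisField p h) (Fin (n+1) → GaloisField p h)

noncomputable instance (p h n : ℕ) [Fact p.Prime] : Fintype (PGPoint p h n) :=
  @Fintype.ofFinite _ (Quotient.finite _)

/-- let `B` be a set of points of `PG(n,q)` such that every point outside
`B` lying on a secant line to `B` lies on no tangent line to `B`.  If the span of `B`
has (projective) dimension at least `n-k+2`, then `|B| ≥ θ_{n-k+1}`. -/
theorem stmt17 (p h n k : ℕ) [Fact p.Prime] (hh : 0 < h) (hk1 : 1 ≤ k) (hkn : k ≤ n)
    (B : Finset (PGPoint p h n))
    (hsec : ∀ Q : PGPoint p h n, Q ∉ B →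
      (∃ L : Submodule (GaloisField p h) (Fin (n+1) → GaloisField p h),
        Module.finrank (GaloisField p h) L = 2 ∧ Q.submodule ≤ L ∧
          2 ≤ (B.filter fun P => P.submodule ≤ L).card) →
      ∀ L : Submodule (GaloisField p h) (Fin (n+1) → GaloisField p h),
        Module.finrank (GaloisField p h) L = 2 → Q.submodule ≤ L →
          (B.filter fun P => P.submodule ≤ L).card ≠ 1)
    (hspan : n - k + 3 ≤ Module.finrank (GaloisField p h)
      (↥(⨆ P ∈ B, (Projectivization.submodule P :
          Submodule (GaloisField p h) (Fin (n+1) → GaloisField p h))))) :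
    ∑ i ∈ Finset.range (n - k + 2), (p ^ h) ^ i ≤ B.card := by
  classical
  set K := GaloisField p h with hKdef
  set V := (Fin (n+1) → K) with hVdef
  haveI : Fintype K := Fintype.ofFinite _
  set q := Fintype.card K with hq
  have hqph : q = p ^ h := by
    rw [hq, ← Nat.card_eq_fintype_card, GaloisField.card p h hh.ne']
  have hq2 : 2 ≤ q := Fintype.one_lt_card
  set m := n - k + 2 with hm
  set S := (⨆ P ∈ B, Projectivization.submodule P : Submodule K V) with hS
  set r := Module.finrank K S with hrdef
  have hr : m + 1 ≤ r := by omega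
  -- B is nonempty
  obtain ⟨P, hP⟩ : ∃ P, P ∈ B := by
    by_contra hB
    push_neg at hB
    have hBe : B = ∅ := Finset.eq_empty_of_forall_notMem hB
    have hSbot : S = ⊥ := by
      rw [hS, hBe, ← Finset.sup_eq_iSup, Finset.sup_empty]
    have hr0 : r = 0 := by rw [hrdef, hSbot]; exact finrank_bot K V
    omega
  have hPS : P.submodule ≤ S := by
    rw [hS]
    exact le_iSup₂ (f := fun (Q : PGPoint p h n) (_ : Q ∈ B) => Q.submodule) P hP
  have hPr : Module.finrank K P.submodule = 1 := Projectivization.finrank_submodule P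
  -- the choice function
  set g : V → PGPoint p h n := fun v =>
    if hv : ∃ b, b ∈ B ∧ b ≠ P ∧ b.submodule ≤ P.submodule ⊔ (K ∙ v) then hv.choose else P
    with hg
  set T : Finset V := Finset.univ.filter (fun v => v ∈ S ∧ v ∉ P.submodule) with hT
  have hTcard : T.card + q ^ 1 = q ^ r := by
    have h := aux_card_sdiff (K := K) (V := V) hPS
    rw [hPr, ← hq, ← hrdef] at h
    exact h
  have hgspec : ∀ v ∈ T, g v ∈ B ∧ g v ≠ P ∧ (g v).submodule ≤ P.submodule ⊔ (K ∙ v) := by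
    intro v hv
    have hv' := Finset.mem_filter.mp hv
    have hvS : v ∈ S := hv'.2.1
    have hvP : v ∉ P.submodule := hv'.2.2
    have hex : ∃ b, b ∈ B ∧ b ≠ P ∧ b.submodule ≤ P.submodule ⊔ (K ∙ v) :=
      aux_main B hsec hP hvS hvP
    rw [hg]
    simp only [dif_pos hex]
    exact hex.choose_spec
  have hfibmem : ∀ v ∈ T, g v ∈ B := fun v hv => (hgspec v hv).1
  have hsum : T.card = ∑ b ∈ B, (T.filter (fun v => g v = b)).card :=
    Finset.card_eq_sum_card_fiberwise hfibmem
  have hbound : ∀ b ∈ B, (T.filter (fun v => g v = b)).card ≤ q ^ 2 - q ^ 1 := by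
    intro b hb
    rcases Finset.eq_empty_or_nonempty (T.filter (fun v => g v = b)) with he | ⟨v0, hv0⟩
    · rw [he]; simp
    · obtain ⟨hv0T, hv0g⟩ := Finset.mem_filter.mp hv0
      obtain ⟨hbB, hbP, -⟩ := hv0g ▸ hgspec v0 hv0T
      -- b ≠ P, set L_b
      have hbrep : b.rep ∉ P.submodule := by
        intro hmem
        rw [Projectivization.submodule_eq] at hmem
        have : b.submodule = P.submodule := by
          rw [Projectivization.submodule_eq, Projectivization.submodule_eq]
          exact aux_span_eq_of_mem hmem (Projectivization.rep_nonzero b)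
        exact hbP (Projectivization.submodule_injective this)
      have hLb2 : Module.finrank K ↥(P.submodule ⊔ b.submodule) = 2 := by
        rw [Projectivization.submodule_eq P, Projectivization.submodule_eq b]
        exact aux_rank2 (Projectivization.rep_nonzero P)
          (by rw [← Projectivization.submodule_eq]; exact hbrep)
      have hsubset : T.filter (fun v => g v = b) ⊆
          Finset.univ.filter (fun v => v ∈ P.submodule ⊔ b.submodule ∧ v ∉ P.submodule) := by
        intro v hv
        obtain ⟨hvT, hvg⟩ := Finset.mem_filter.mp hv
        obtain ⟨-, hvS, hvP⟩ : v ∈ (Finset.univ : Finset V) ∧ v ∈ S ∧ v ∉ P.submodule := by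
          have := Finset.mem_filter.mp hvT
          exact ⟨this.1, this.2.1, this.2.2⟩
        obtain ⟨-, -, hble⟩ := hvg ▸ hgspec v hvT
        have hv0' : v ≠ 0 := fun h0 => hvP (h0 ▸ Submodule.zero_mem _)
        have hLv2 : Module.finrank K ↥(P.submodule ⊔ (K ∙ v)) = 2 := by
          rw [Projectivization.submodule_eq P]
          exact aux_rank2 (Projectivization.rep_nonzero P)
            (by rw [← Projectivization.submodule_eq]; exact hvP)
        have hle : P.submodule ⊔ b.submodule ≤ P.submodule ⊔ (K ∙ v) :=
          sup_le le_sup_left hble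
        have heq : P.submodule ⊔ b.submodule = P.submodule ⊔ (K ∙ v) :=
          Submodule.eq_of_le_of_finrank_le hle (by rw [hLb2, hLv2])
        refine Finset.mem_filter.mpr ⟨Finset.mem_univ _, ?_, hvP⟩
        rw [heq]
        exact le_sup_right (b := (K ∙ v)) (Submodule.mem_span_singleton_self v)
      have hFb : (Finset.univ.filter
          (fun v => v ∈ P.submodule ⊔ b.submodule ∧ v ∉ P.submodule)).card + q ^ 1 = q ^ 2 := by
        have h := aux_card_sdiff (K := K) (V := V) (le_sup_left (b := b.submodule) : P.submodule ≤ _)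
        rw [hPr, hLb2, ← hq] at h
        exact h
      exact le_trans (Finset.card_le_card hsubset)
        (Nat.le_sub_of_add_le (le_of_eq hFb))
  have hsumle : T.card ≤ B.card * (q ^ 2 - q ^ 1) := by
    rw [hsum]
    calc ∑ b ∈ B, (T.filter (fun v => g v = b)).card
        ≤ ∑ _b ∈ B, (q ^ 2 - q ^ 1) := Finset.sum_le_sum hbound
      _ = B.card * (q ^ 2 - q ^ 1) := by rw [Finset.sum_const, smul_eq_mul]
  -- arithmetic conclusion
  obtain ⟨q', hq'⟩ : ∃ q', q = q' + 1 := ⟨q - 1, by omega⟩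
  have hgeo := aux_geom q' m
  have hpowle : q ^ (m + 1) ≤ q ^ r := Nat.pow_le_pow_right (by omega) hr
  have hkey : (∑ i ∈ Finset.range m, q ^ i) * (q ^ 2 - q ^ 1) + q ^ 1 = q ^ (m + 1) := by
    have h21 : q ^ 2 - q ^ 1 = q * q' := by
      have e2 : q ^ 2 = q * q' + q := by rw [hq']; ring
      have e1 : q ^ 1 = q := pow_one q
      omega
    rw [h21, pow_succ q m, pow_one q]
    calc (∑ i ∈ Finset.range m, q ^ i) * (q * q') + q
        = ((∑ i ∈ Finset.range m, q ^ i) * q' + 1) * q := by ring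
      _ = q ^ m * q := by rw [hq', aux_geom]
  have hfinal : (∑ i ∈ Finset.range m, q ^ i) * (q ^ 2 - q ^ 1)
      ≤ B.card * (q ^ 2 - q ^ 1) := by omega
  have hqq : 0 < q ^ 2 - q ^ 1 := by
    have : q ^ 1 < q ^ 2 := Nat.pow_lt_pow_right (by omega) (by omega)
    omega
  have := Nat.le_of_mul_le_mul_right hfinal hqq
  rw [hqph] at this
  exact this
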